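/- The functions f^t satisfy the dynamic programming recursion: for every integer 1 ≤ t ≤ n and every φ ∈ ℝ, f^t(φ) = min over integers 0 ≤ s ≤ t−1 of the infimum over φ' ∈ ℝ of [ f^s(φ') + C(s,t,φ',φ) + h(t−s) + β ], where f^0(φ') = 0 for all φ'. -/

import Mathlib

open Finset

/-- Segment cost `C(s,t,φ,ψ)`: cost of fitting data `y_{s+1:t}` with a linear
function taking value `φ` at time `s` and value `ψ` at time `t`. -/
noncomputable def segCost (y : ℕ → ℝ) (σ : ℝ) (s t : ℕ) (φ ψ : ℝ) : ℝ :=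
  (1 / σ ^ 2) * ∑ j ∈ Finset.Icc (s + 1) t,
    (y j - φ - ((ψ - φ) / ((t : ℝ) - (s : ℝ))) * ((j : ℝ) - (s : ℝ))) ^ 2

/-- `ValidCP t τ` : `τ` is a (possibly empty) strictly increasing vector of
changepoints `0 < τ₁ < ⋯ < τ_k < t`, i.e. an element of `T_t`. -/
def ValidCP (t : ℕ) (τ : List ℕ) : Prop :=
  τ.Chain' (· < ·) ∧ ∀ x ∈ τ, 0 < x ∧ x < t

/-- Penalised cost of segmenting `y_{1:t}` with changepoints `τ = (τ₁,…,τ_k)`,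
fitted values `φs 0, …, φs k` at times `0, τ₁, …, τ_k`, and fitted value `φ` at time `t`. -/
noncomputable def segTotal (y : ℕ → ℝ) (σ β : ℝ) (h : ℕ → ℝ) (t : ℕ)
    (τ : List ℕ) (φs : ℕ → ℝ) (φ : ℝ) : ℝ :=
  let p : ℕ → ℕ := fun i => (0 :: τ).getD i 0
  (∑ i ∈ Finset.range τ.length,
      (segCost y σ (p i) (p (i + 1)) (φs i) (φs (i + 1)) + h (p (i + 1) - p i)))
    + segCost y σ (p τ.length) t (φs τ.length) φ + h (t - p τ.length)
    + β * ((τ.length : ℝ) + 1)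

/-- `f_τ^t(φ)` : minimum penalised cost of segmenting `y_{1:t}` with changepoints `τ`
and fitted value `φ` at time `t`, minimised over the fitted values at the changepoints. -/
noncomputable def fseg (y : ℕ → ℝ) (σ β : ℝ) (h : ℕ → ℝ) (t : ℕ)
    (τ : List ℕ) (φ : ℝ) : ℝ :=
  ⨅ φs : ℕ → ℝ, segTotal y σ β h t τ φs φ

/-- `f^t(φ)` : minimum penalised cost of segmenting `y_{1:t}` with fitted value `φ`
at time `t`, minimised over all changepoint vectors in `T_t`; `f^0 ≡ 0`. -/
noncomputable def fDP (y : ℕ → ℝ) (σ β : ℝ) (h : ℕ → ℝ) (t : ℕ) (φ : ℝ) : ℝ :=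
  if t = 0 then 0 else ⨅ τ : {τ : List ℕ // ValidCP t τ}, fseg y σ β h t τ.1 φ

-- auxiliary
def cp (τ : List ℕ) (i : ℕ) : ℕ := (0 :: τ).getD i 0

section aux
variable (y : ℕ → ℝ) (σ β : ℝ) (h : ℕ → ℝ)

lemma segTotal_def (t : ℕ) (τ : List ℕ) (φs : ℕ → ℝ) (φ : ℝ) :
    segTotal y σ β h t τ φs φ =
      (∑ i ∈ Finset.range τ.length,
        (segCost y σ (cp τ i) (cp τ (i+1)) (φs i) (φs (i+1)) + h (cp τ (i+1) - cp τ i)))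
      + segCost y σ (cp τ τ.length) t (φs τ.length) φ + h (t - cp τ τ.length)
      + β * ((τ.length : ℝ) + 1) := rfl

lemma segCost_nonneg (hσ : 0 < σ) (s t : ℕ) (φ ψ : ℝ) : 0 ≤ segCost y σ s t φ ψ := by
  unfold segCost
  have : (0:ℝ) < σ ^ 2 := by positivity
  positivity

lemma cp_zero (τ : List ℕ) : cp τ 0 = 0 := rfl

lemma cp_succ (τ : List ℕ) (i : ℕ) : cp τ (i+1) = τ.getD i 0 := rfl

lemma cp_lt_succ {τ : List ℕ} (hc : τ.Chain' (· < ·)) (hpos : ∀ x ∈ τ, 0 < x)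
    {i : ℕ} (hi : i < τ.length) : cp τ i < cp τ (i+1) := by
  have hl : (0 :: τ).Chain' (· < ·) := by
    show List.IsChain _ _
    rw [List.isChain_cons]
    exact ⟨fun y hy => hpos y (List.mem_of_mem_head? hy), hc⟩
  have hget := (List.isChain_iff_getElem.mp hl) i (by simpa using hi)
  rw [cp, cp, List.getD_eq_getElem _ _ (by simp; omega),
      List.getD_eq_getElem _ _ (by simp; omega)]
  simpa using hget

lemma cp_mem {τ : List ℕ} {i : ℕ} (h1 : i < τ.length) : cp τ (i+1) ∈ τ := by
  rw [cp_succ, List.getD_eq_getElem _ _ h1]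
  exact List.getElem_mem _

lemma cp_lt_of_valid {s : ℕ} {τ : List ℕ} (hv : ValidCP s τ) (hs : 1 ≤ s)
    {i : ℕ} (hi : i ≤ τ.length) : cp τ i < s := by
  cases i with
  | zero => simp only [cp_zero]; omega
  | succ j => exact (hv.2 _ (cp_mem (by omega))).2

lemma le_cp {τ : List ℕ} (hc : τ.Chain' (· < ·)) (hpos : ∀ x ∈ τ, 0 < x) :
    ∀ i, i ≤ τ.length → i ≤ cp τ i := by
  intro i
  induction i with
  | zero => intro; exact Nat.zero_le _
  | succ j ih =>
    intro hj
    have h1 := cp_lt_succ hc hpos (show j < τ.length by omega)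
    have h2 := ih (by omega)
    omega

lemma length_lt_of_valid {s : ℕ} {τ : List ℕ} (hv : ValidCP s τ) (hs : 1 ≤ s) :
    τ.length < s :=
  lt_of_le_of_lt (le_cp hv.1 (fun x hx => (hv.2 x hx).1) τ.length le_rfl)
    (cp_lt_of_valid hv hs le_rfl)

end aux

section aux2
variable (y : ℕ → ℝ) (σ β : ℝ) (h : ℕ → ℝ)

lemma cp_append_of_le {s : ℕ} {τ' : List ℕ} {i : ℕ} (hi : i ≤ τ'.length) :
    cp (τ' ++ [s]) i = cp τ' i := by
  show ((0 :: τ') ++ [s]).getD i 0 = (0 :: τ').getD i 0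
  exact List.getD_append _ _ _ _ (by simp; omega)

lemma cp_append_last {s : ℕ} {τ' : List ℕ} :
    cp (τ' ++ [s]) (τ'.length + 1) = s := by
  show ((0 :: τ') ++ [s]).getD (τ'.length + 1) 0 = s
  rw [List.getD_append_right _ _ _ _ (by simp)]
  simp

lemma segTotal_concat (t s : ℕ) (τ' : List ℕ) (φs : ℕ → ℝ) (φ : ℝ) :
    segTotal y σ β h t (τ' ++ [s]) φs φ =
      segTotal y σ β h s τ' φs (φs (τ'.length + 1))
        + segCost y σ s t (φs (τ'.length + 1)) φ + h (t - s) + β := by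
  rw [segTotal_def, segTotal_def, List.length_append, List.length_singleton,
    Finset.sum_range_succ,
    Finset.sum_congr rfl (fun i hi => by
      rw [cp_append_of_le (le_of_lt (Finset.mem_range.mp hi)),
        cp_append_of_le (Finset.mem_range.mp hi)]),
    cp_append_of_le (le_refl τ'.length), cp_append_last]
  push_cast
  ring

lemma segTotal_congr {t : ℕ} {τ : List ℕ} {φs φs2 : ℕ → ℝ} {φ : ℝ}
    (hfs : ∀ i ≤ τ.length, φs i = φs2 i) :
    segTotal y σ β h t τ φs φ = segTotal y σ β h t τ φs2 φ := by
  rw [segTotal_def, segTotal_def, hfs τ.length le_rfl,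
    Finset.sum_congr rfl (fun i hi => by
      rw [hfs i (le_of_lt (Finset.mem_range.mp hi)), hfs (i+1) (Finset.mem_range.mp hi)])]

lemma segTotal_ge (hσ : 0 < σ) (hβ : 0 < β) {t s : ℕ} (hs : 1 ≤ s) (hst : s ≤ t)
    {τ : List ℕ} (hv : ValidCP s τ) (φs : ℕ → ℝ) (φ : ℝ) :
    -((t : ℝ) * ∑ i ∈ Finset.Icc 1 t, |h i|) ≤ segTotal y σ β h s τ φs φ := by
  set S := ∑ i ∈ Finset.Icc 1 t, |h i| with hSdef
  have hS0 : 0 ≤ S := Finset.sum_nonneg fun i _ => abs_nonneg _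
  have hhge : ∀ j ∈ Finset.Icc 1 t, -S ≤ h j := by
    intro j hj
    have h1 : |h j| ≤ S := Finset.single_le_sum (fun i _ => abs_nonneg (h i)) hj
    have h2 := neg_abs_le (h j)
    linarith
  have hpos : ∀ x ∈ τ, 0 < x := fun x hx => (hv.2 x hx).1
  have harg : ∀ i < τ.length, cp τ (i+1) - cp τ i ∈ Finset.Icc 1 t := by
    intro i hi
    have h1 := cp_lt_succ hv.1 hpos hi
    have h2 : cp τ (i+1) < s := cp_lt_of_valid hv hs hi
    simp only [Finset.mem_Icc]
    omega
  have hfin : s - cp τ τ.length ∈ Finset.Icc 1 t := by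
    have h2 : cp τ τ.length < s := cp_lt_of_valid hv hs le_rfl
    simp only [Finset.mem_Icc]
    omega
  have hlen : τ.length + 1 ≤ s := length_lt_of_valid hv hs
  rw [segTotal_def]
  have hterm : ∀ i ∈ Finset.range τ.length,
      -S ≤ segCost y σ (cp τ i) (cp τ (i+1)) (φs i) (φs (i+1)) + h (cp τ (i+1) - cp τ i) := by
    intro i hi
    have h1 := hhge _ (harg i (Finset.mem_range.mp hi))
    have h2 := segCost_nonneg y σ hσ (cp τ i) (cp τ (i+1)) (φs i) (φs (i+1))
    linarith
  have h1 : (τ.length : ℝ) * (-S) ≤ ∑ i ∈ Finset.range τ.length,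
      (segCost y σ (cp τ i) (cp τ (i+1)) (φs i) (φs (i+1)) + h (cp τ (i+1) - cp τ i)) := by
    have := Finset.card_nsmul_le_sum (Finset.range τ.length) _ _ hterm
    simpa [nsmul_eq_mul] using this
  have h2 := segCost_nonneg y σ hσ (cp τ τ.length) s (φs τ.length) φ
  have h3 := hhge _ hfin
  have h4 : 0 ≤ β * ((τ.length : ℝ) + 1) := by positivity
  have h5 : (τ.length : ℝ) + 1 ≤ (t : ℝ) := by
    have : τ.length + 1 ≤ t := le_trans hlen hst
    exact_mod_cast this
  nlinarith [mul_le_mul_of_nonneg_right h5 hS0]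

lemma nil_valid (t : ℕ) : ValidCP t [] := ⟨List.isChain_nil, by simp⟩

lemma fseg_ge (hσ : 0 < σ) (hβ : 0 < β) {t s : ℕ} (hs : 1 ≤ s) (hst : s ≤ t)
    {τ : List ℕ} (hv : ValidCP s τ) (φ : ℝ) :
    -((t : ℝ) * ∑ i ∈ Finset.Icc 1 t, |h i|) ≤ fseg y σ β h s τ φ :=
  le_ciInf fun φs => segTotal_ge y σ β h hσ hβ hs hst hv φs φ

lemma fDP_ge (hσ : 0 < σ) (hβ : 0 < β) {t s : ℕ} (hst : s ≤ t) (φ : ℝ) :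
    -((t : ℝ) * ∑ i ∈ Finset.Icc 1 t, |h i|) ≤ fDP y σ β h s φ := by
  have hS0 : 0 ≤ ∑ i ∈ Finset.Icc 1 t, |h i| :=
    Finset.sum_nonneg fun i _ => abs_nonneg _
  rcases Nat.eq_zero_or_pos s with hs0 | hs1
  · rw [hs0]
    simp only [fDP, if_pos]
    nlinarith
  · rw [fDP, if_neg (by omega)]
    have : Nonempty {τ : List ℕ // ValidCP s τ} := ⟨⟨[], nil_valid s⟩⟩
    exact le_ciInf fun τ => fseg_ge y σ β h hσ hβ hs1 hst τ.2 φ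

lemma bddBelow_segTotal (hσ : 0 < σ) (hβ : 0 < β) {t s : ℕ} (hs : 1 ≤ s) (hst : s ≤ t)
    {τ : List ℕ} (hv : ValidCP s τ) (φ : ℝ) :
    BddBelow (Set.range fun φs : ℕ → ℝ => segTotal y σ β h s τ φs φ) := by
  refine ⟨-((t : ℝ) * ∑ i ∈ Finset.Icc 1 t, |h i|), ?_⟩
  rintro x ⟨φs, rfl⟩
  exact segTotal_ge y σ β h hσ hβ hs hst hv φs φ

lemma bddBelow_fseg (hσ : 0 < σ) (hβ : 0 < β) {t s : ℕ} (hs : 1 ≤ s) (hst : s ≤ t) (φ : ℝ) :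
    BddBelow (Set.range fun τ : {τ : List ℕ // ValidCP s τ} => fseg y σ β h s τ.1 φ) := by
  refine ⟨-((t : ℝ) * ∑ i ∈ Finset.Icc 1 t, |h i|), ?_⟩
  rintro x ⟨τ, rfl⟩
  exact fseg_ge y σ β h hσ hβ hs hst τ.2 φ

lemma bddBelow_F (hσ : 0 < σ) (hβ : 0 < β) {t s : ℕ} (hst : s ≤ t) (φ : ℝ) :
    BddBelow (Set.range fun φ' : ℝ =>
      fDP y σ β h s φ' + segCost y σ s t φ' φ + h (t - s) + β) := by
  refine ⟨-((t : ℝ) * ∑ i ∈ Finset.Icc 1 t, |h i|) + h (t - s) + β, ?_⟩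
  rintro x ⟨φ', rfl⟩
  dsimp only
  have h1 := fDP_ge y σ β h hσ hβ hst φ'
  have h2 := segCost_nonneg y σ hσ s t φ' φ
  linarith

end aux2

section aux3
variable (y : ℕ → ℝ) (σ β : ℝ) (h : ℕ → ℝ)

lemma valid_concat {t s : ℕ} (hs1 : 0 < s) (hst : s < t) {τ' : List ℕ}
    (hv : ValidCP s τ') : ValidCP t (τ' ++ [s]) := by
  constructor
  · show List.IsChain _ _
    rw [List.isChain_append]
    refine ⟨hv.1, List.isChain_singleton s, ?_⟩
    intro x hx y hy
    simp only [List.head?_cons, Option.mem_some_iff] at hy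
    subst hy
    exact (hv.2 x (List.mem_of_mem_getLast? hx)).2
  · intro x hx
    rcases List.mem_append.mp hx with hx' | hx'
    · exact ⟨(hv.2 x hx').1, lt_trans (hv.2 x hx').2 hst⟩
    · simp only [List.mem_singleton] at hx'
      subst hx'
      exact ⟨hs1, hst⟩

lemma valid_of_concat {t s : ℕ} {τ' : List ℕ} (hv : ValidCP t (τ' ++ [s])) :
    0 < s ∧ s < t ∧ ValidCP s τ' := by
  have hsmem : s ∈ τ' ++ [s] := List.mem_append.mpr (Or.inr (by simp))
  have hs := hv.2 s hsmem
  have hpair := List.isChain_iff_pairwise.mp hv.1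
  rw [List.pairwise_append] at hpair
  refine ⟨hs.1, hs.2, (List.isChain_append.mp hv.1).1, ?_⟩
  intro x hx
  exact ⟨(hv.2 x (List.mem_append.mpr (Or.inl hx))).1,
    hpair.2.2 x hx s (by simp)⟩

end aux3

/-- dynamic programming recursion: for `1 ≤ t ≤ n` and every `φ`,
`f^t(φ) = min_{0 ≤ s ≤ t-1} inf_{φ'} [f^s(φ') + C(s,t,φ',φ) + h(t-s) + β]`,
with the convention `f^0 ≡ 0`. -/
theorem statement2 (n : ℕ) (hn : 1 ≤ n) (y : ℕ → ℝ) (σ : ℝ) (hσ : 0 < σ)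
    (β : ℝ) (hβ : 0 < β) (h : ℕ → ℝ)
    (t : ℕ) (ht1 : 1 ≤ t) (htn : t ≤ n) (φ : ℝ) :
    fDP y σ β h t φ =
      ⨅ s : Fin t, ⨅ φ' : ℝ,
        (fDP y σ β h (s : ℕ) φ' + segCost y σ (s : ℕ) t φ' φ + h (t - (s : ℕ)) + β) := by
  have ht0 : t ≠ 0 := by omega
  haveI hne : Nonempty {τ : List ℕ // ValidCP t τ} := ⟨⟨[], nil_valid t⟩⟩
  haveI hFt : Nonempty (Fin t) := ⟨⟨0, by omega⟩⟩
  have hb4 : BddBelow (Set.range fun s : Fin t => ⨅ φ' : ℝ,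
      (fDP y σ β h (s : ℕ) φ' + segCost y σ (s : ℕ) t φ' φ + h (t - (s : ℕ)) + β)) :=
    (Set.finite_range _).bddBelow
  apply le_antisymm
  · refine le_ciInf fun s => le_ciInf fun φ' => ?_
    rcases Nat.eq_zero_or_pos (s : ℕ) with hs0 | hs1
    · rw [hs0]
      have h0 : fDP y σ β h 0 φ' = 0 := by simp [fDP]
      rw [h0]
      have hle1 : fDP y σ β h t φ ≤ fseg y σ β h t [] φ := by
        rw [fDP, if_neg ht0]
        exact ciInf_le (bddBelow_fseg y σ β h hσ hβ ht1 le_rfl φ) ⟨[], nil_valid t⟩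
      have hle2 : fseg y σ β h t [] φ ≤ segTotal y σ β h t [] (fun _ => φ') φ :=
        ciInf_le (bddBelow_segTotal y σ β h hσ hβ ht1 le_rfl (nil_valid t) φ) _
      have heq : segTotal y σ β h t [] (fun _ => φ') φ = segCost y σ 0 t φ' φ + h (t - 0) + β := by
        rw [segTotal_def]; simp [cp]
      linarith
    · have hslt : (s : ℕ) < t := s.2
      have key : fDP y σ β h t φ - (segCost y σ (s : ℕ) t φ' φ + h (t - (s : ℕ)) + β)
          ≤ fDP y σ β h (s : ℕ) φ' := by
        conv_rhs => rw [fDP, if_neg (show (s : ℕ) ≠ 0 by omega)]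
        haveI : Nonempty {τ : List ℕ // ValidCP (s : ℕ) τ} := ⟨⟨[], nil_valid _⟩⟩
        refine le_ciInf fun τ' => ?_
        simp only [fseg]
        refine le_ciInf fun φs => ?_
        rw [sub_le_iff_le_add]
        set φs2 : ℕ → ℝ := fun i => if i ≤ τ'.1.length then φs i else φ' with hφs2
        have hvt : ValidCP t (τ'.1 ++ [(s : ℕ)]) := valid_concat hs1 hslt τ'.2
        have hle1 : fDP y σ β h t φ ≤ fseg y σ β h t (τ'.1 ++ [(s : ℕ)]) φ := by
          rw [fDP, if_neg ht0]
          exact ciInf_le (bddBelow_fseg y σ β h hσ hβ ht1 le_rfl φ) ⟨_, hvt⟩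
        have hle2 : fseg y σ β h t (τ'.1 ++ [(s : ℕ)]) φ
            ≤ segTotal y σ β h t (τ'.1 ++ [(s : ℕ)]) φs2 φ :=
          ciInf_le (bddBelow_segTotal y σ β h hσ hβ ht1 le_rfl hvt φ) _
        have hdec := segTotal_concat y σ β h t (s : ℕ) τ'.1 φs2 φ
        have hv2 : φs2 (τ'.1.length + 1) = φ' := by simp [hφs2]
        have hcongr : segTotal y σ β h (s : ℕ) τ'.1 φs2 φ'
            = segTotal y σ β h (s : ℕ) τ'.1 φs φ' :=
          segTotal_congr y σ β h fun i hi => by simp [hφs2, hi]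
        rw [hv2] at hdec
        linarith
      linarith
  · rw [fDP, if_neg ht0]
    refine le_ciInf fun τ => ?_
    simp only [fseg]
    refine le_ciInf fun φs => ?_
    obtain ⟨τl, hv⟩ := τ
    dsimp only
    rcases eq_or_ne τl [] with rfl | hnil
    · have step1 : (⨅ s : Fin t, ⨅ φ' : ℝ,
          (fDP y σ β h (s : ℕ) φ' + segCost y σ (s : ℕ) t φ' φ + h (t - (s : ℕ)) + β))
          ≤ ⨅ φ' : ℝ, (fDP y σ β h 0 φ' + segCost y σ 0 t φ' φ + h (t - 0) + β) :=
        ciInf_le hb4 ⟨0, by omega⟩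
      have step2 : (⨅ φ' : ℝ, (fDP y σ β h 0 φ' + segCost y σ 0 t φ' φ + h (t - 0) + β))
          ≤ fDP y σ β h 0 (φs 0) + segCost y σ 0 t (φs 0) φ + h (t - 0) + β :=
        ciInf_le (bddBelow_F y σ β h hσ hβ (Nat.zero_le t) φ) (φs 0)
      have heq : fDP y σ β h 0 (φs 0) + segCost y σ 0 t (φs 0) φ + h (t - 0) + β
          = segTotal y σ β h t [] φs φ := by
        rw [segTotal_def]
        simp [fDP, cp]
      linarith
    · obtain ⟨τ', s, rfl⟩ : ∃ τ' s, τl = τ' ++ [s] :=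
        ⟨τl.dropLast, τl.getLast hnil, (List.dropLast_append_getLast hnil).symm⟩
      obtain ⟨hs1, hslt, hv'⟩ := valid_of_concat hv
      have step1 : (⨅ s : Fin t, ⨅ φ' : ℝ,
          (fDP y σ β h (s : ℕ) φ' + segCost y σ (s : ℕ) t φ' φ + h (t - (s : ℕ)) + β))
          ≤ ⨅ φ' : ℝ, (fDP y σ β h s φ' + segCost y σ s t φ' φ + h (t - s) + β) :=
        ciInf_le hb4 ⟨s, hslt⟩
      have step2 : (⨅ φ' : ℝ, (fDP y σ β h s φ' + segCost y σ s t φ' φ + h (t - s) + β))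
          ≤ fDP y σ β h s (φs (τ'.length + 1)) + segCost y σ s t (φs (τ'.length + 1)) φ
            + h (t - s) + β :=
        ciInf_le (bddBelow_F y σ β h hσ hβ (le_of_lt hslt) φ) (φs (τ'.length + 1))
      have step3 : fDP y σ β h s (φs (τ'.length + 1)) ≤ segTotal y σ β h s τ' φs (φs (τ'.length + 1)) := by
        rw [fDP, if_neg (by omega)]
        haveI : Nonempty {τ : List ℕ // ValidCP s τ} := ⟨⟨[], nil_valid _⟩⟩
        have ha : (⨅ τ'' : {τ : List ℕ // ValidCP s τ}, fseg y σ β h s τ''.1 (φs (τ'.length + 1)))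
            ≤ fseg y σ β h s τ' (φs (τ'.length + 1)) :=
          ciInf_le (bddBelow_fseg y σ β h hσ hβ hs1 (le_of_lt hslt) _) ⟨τ', hv'⟩
        have hb : fseg y σ β h s τ' (φs (τ'.length + 1))
            ≤ segTotal y σ β h s τ' φs (φs (τ'.length + 1)) :=
          ciInf_le (bddBelow_segTotal y σ β h hσ hβ hs1 (le_of_lt hslt) hv' _) φs
        linarith
      have hdec := segTotal_concat y σ β h t s τ' φs φ
      linarith
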